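/- Positive definiteness of the 4×4 matrix [[1+tα−y₁, 0, −y₃, −y₃], [0, tα−y₂, −y₁, 0], [−y₃, −y₁, tα−y₃, 0], [−y₃, 0, 0, tα]] (with t > 0, α > 0) is equivalent to the system: 1 + tα − y₁ − y₃²/(tα) > 0, tα − y₂ > 0, −y₃ + tα − y₃²/(1 + tα − y₁ − y₃²/(tα)) > 0, and tα − y₁²/(−y₃ + tα − y₃²/(1 + tα − y₁ − y₃²/(tα))) > y₂. -/

import Mathlib

open Matrix

set_option maxHeartbeats 1600000 in
private lemma counterexample_aux (a b c y₁ y₂ y₃ : ℝ) (ha : 0 < a)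
    (hbdef : b = 1 + a - y₁ - y₃ ^ 2 / a)
    (hcdef : c = -y₃ + a - y₃ ^ 2 / b) :
    (!![1 + a - y₁, 0, -y₃, -y₃;
        0, a - y₂, -y₁, 0;
        -y₃, -y₁, a - y₃, 0;
        -y₃, 0, 0, a] : Matrix (Fin 4) (Fin 4) ℝ).PosDef ↔
      (0 < b ∧ 0 < a - y₂ ∧ 0 < c ∧ y₂ < a - y₁ ^ 2 / c) := by
  have ha' : a ≠ 0 := ha.ne'
  rw [Matrix.posDef_iff_dotProduct_mulVec]
  have key : ∀ x : Fin 4 → ℝ, star x ⬝ᵥ ((!![1 + a - y₁, 0, -y₃, -y₃;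
        0, a - y₂, -y₁, 0;
        -y₃, -y₁, a - y₃, 0;
        -y₃, 0, 0, a] : Matrix (Fin 4) (Fin 4) ℝ) *ᵥ x) =
      (1+a-y₁)*x 0^2 + (a-y₂)*x 1^2 + (a-y₃)*x 2^2 + a*x 3^2
        - 2*y₃*x 0*x 2 - 2*y₃*x 0*x 3 - 2*y₁*x 1*x 2 := by
    intro x
    simp [dotProduct, Matrix.mulVec, Fin.sum_univ_four, Matrix.vecHead, Matrix.vecTail]
    ring
  constructor
  · rintro ⟨hH, hq⟩
    have hb : 0 < b := by
      have hv : (![1, 0, 0, y₃/a] : Fin 4 → ℝ) ≠ 0 := by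
        intro h; have := congrFun h 0; simp at this
      have hpos := hq hv
      rw [key] at hpos
      rw [show (![1, 0, 0, y₃/a] : Fin 4 → ℝ) 0 = 1 from rfl,
        show (![1, 0, 0, y₃/a] : Fin 4 → ℝ) 1 = 0 from rfl,
        show (![1, 0, 0, y₃/a] : Fin 4 → ℝ) 2 = 0 from rfl,
        show (![1, 0, 0, y₃/a] : Fin 4 → ℝ) 3 = y₃/a from rfl] at hpos
      have e : (1+a-y₁)*(1:ℝ)^2 + (a-y₂)*(0:ℝ)^2 + (a-y₃)*(0:ℝ)^2 + a*(y₃/a)^2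
          - 2*y₃*1*0 - 2*y₃*1*(y₃/a) - 2*y₁*0*0 = b := by
        rw [hbdef]; field_simp; ring
      linarith [e ▸ hpos]
    have hb' : b ≠ 0 := hb.ne'
    have h2 : 0 < a - y₂ := by
      have hv : (![0, 1, 0, 0] : Fin 4 → ℝ) ≠ 0 := by
        intro h; have := congrFun h 1; simp at this
      have hpos := hq hv
      rw [key] at hpos
      rw [show (![0, 1, 0, 0] : Fin 4 → ℝ) 0 = 0 from rfl,
        show (![0, 1, 0, 0] : Fin 4 → ℝ) 1 = 1 from rfl,
        show (![0, 1, 0, 0] : Fin 4 → ℝ) 2 = 0 from rfl,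
        show (![0, 1, 0, 0] : Fin 4 → ℝ) 3 = 0 from rfl] at hpos
      nlinarith [hpos]
    have hc : 0 < c := by
      have hv : (![y₃/b, 0, 1, y₃/a*(y₃/b)] : Fin 4 → ℝ) ≠ 0 := by
        intro h; have := congrFun h 2; simp at this
      have hpos := hq hv
      rw [key] at hpos
      rw [show (![y₃/b, 0, 1, y₃/a*(y₃/b)] : Fin 4 → ℝ) 0 = y₃/b from rfl,
        show (![y₃/b, 0, 1, y₃/a*(y₃/b)] : Fin 4 → ℝ) 1 = 0 from rfl,
        show (![y₃/b, 0, 1, y₃/a*(y₃/b)] : Fin 4 → ℝ) 2 = 1 from rfl,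
        show (![y₃/b, 0, 1, y₃/a*(y₃/b)] : Fin 4 → ℝ) 3 = y₃/a*(y₃/b) from rfl] at hpos
      have e : (1+a-y₁)*(y₃/b)^2 + (a-y₂)*(0:ℝ)^2 + (a-y₃)*(1:ℝ)^2 + a*(y₃/a*(y₃/b))^2
          - 2*y₃*(y₃/b)*1 - 2*y₃*(y₃/b)*(y₃/a*(y₃/b)) - 2*y₁*0*1 = c := by
        linear_combination (norm := (field_simp; ring))
          (-(y₃^2/b^2)) * hbdef + (-1 : ℝ) * hcdef
      linarith [e ▸ hpos]
    have hc' : c ≠ 0 := hc.ne'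
    refine ⟨hb, h2, hc, ?_⟩
    have hv : (![y₃/b*(y₁/c), 1, y₁/c, y₃/a*(y₃/b)*(y₁/c)] : Fin 4 → ℝ) ≠ 0 := by
      intro h; have := congrFun h 1; simp at this
    have hpos := hq hv
    rw [key] at hpos
    rw [show (![y₃/b*(y₁/c), 1, y₁/c, y₃/a*(y₃/b)*(y₁/c)] : Fin 4 → ℝ) 0
          = y₃/b*(y₁/c) from rfl,
      show (![y₃/b*(y₁/c), 1, y₁/c, y₃/a*(y₃/b)*(y₁/c)] : Fin 4 → ℝ) 1 = 1 from rfl,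
      show (![y₃/b*(y₁/c), 1, y₁/c, y₃/a*(y₃/b)*(y₁/c)] : Fin 4 → ℝ) 2 = y₁/c from rfl,
      show (![y₃/b*(y₁/c), 1, y₁/c, y₃/a*(y₃/b)*(y₁/c)] : Fin 4 → ℝ) 3
          = y₃/a*(y₃/b)*(y₁/c) from rfl] at hpos
    have e : (1+a-y₁)*(y₃/b*(y₁/c))^2 + (a-y₂)*(1:ℝ)^2 + (a-y₃)*(y₁/c)^2
        + a*(y₃/a*(y₃/b)*(y₁/c))^2
        - 2*y₃*(y₃/b*(y₁/c))*(y₁/c) - 2*y₃*(y₃/b*(y₁/c))*(y₃/a*(y₃/b)*(y₁/c))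
        - 2*y₁*1*(y₁/c) = a - y₁^2/c - y₂ := by
      linear_combination (norm := (field_simp; ring))
        (-(y₁^2*y₃^2/(b^2*c^2))) * hbdef + (-(y₁^2/c^2)) * hcdef
    have := e ▸ hpos
    linarith
  · rintro ⟨hb, h2, hc, hd⟩
    have hb' : b ≠ 0 := hb.ne'
    have hc' : c ≠ 0 := hc.ne'
    have hd' : 0 < a - y₁^2/c - y₂ := by linarith
    constructor
    · ext i j
      fin_cases i <;> fin_cases j <;>
        simp [Matrix.conjTranspose_apply, Matrix.vecHead, Matrix.vecTail]
    · intro x hx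
      rw [key]
      have hid : (1+a-y₁)*x 0^2 + (a-y₂)*x 1^2 + (a-y₃)*x 2^2 + a*x 3^2
          - 2*y₃*x 0*x 2 - 2*y₃*x 0*x 3 - 2*y₁*x 1*x 2
          = a*(x 3 - y₃/a*x 0)^2 + b*(x 0 - y₃/b*x 2)^2 + c*(x 2 - y₁/c*x 1)^2
            + (a - y₁^2/c - y₂)*x 1^2 := by
        linear_combination (norm := (field_simp; ring))
          (-(x 0^2)) * hbdef + (-(x 2^2)) * hcdef
      rw [hid]
      by_contra hpos
      push_neg at hpos
      have n1 : 0 ≤ a*(x 3 - y₃/a*x 0)^2 := by positivity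
      have n2 : 0 ≤ b*(x 0 - y₃/b*x 2)^2 := by positivity
      have n3 : 0 ≤ c*(x 2 - y₁/c*x 1)^2 := by positivity
      have n4 : 0 ≤ (a - y₁^2/c - y₂)*x 1^2 := by positivity
      have hx1 : x 1 = 0 := by
        have h1 : (x 1)^2 ≤ 0 := by nlinarith
        exact pow_eq_zero_iff two_ne_zero |>.mp (le_antisymm h1 (sq_nonneg _))
      have hx2 : x 2 = 0 := by
        have h1 : (x 2 - y₁/c*x 1)^2 ≤ 0 := by nlinarith
        have h0 := pow_eq_zero_iff two_ne_zero |>.mp (le_antisymm h1 (sq_nonneg _))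
        rw [hx1] at h0; simpa using h0
      have hx0 : x 0 = 0 := by
        have h1 : (x 0 - y₃/b*x 2)^2 ≤ 0 := by nlinarith
        have h0 := pow_eq_zero_iff two_ne_zero |>.mp (le_antisymm h1 (sq_nonneg _))
        rw [hx2] at h0; simpa using h0
      have hx3 : x 3 = 0 := by
        have h1 : (x 3 - y₃/a*x 0)^2 ≤ 0 := by nlinarith
        have h0 := pow_eq_zero_iff two_ne_zero |>.mp (le_antisymm h1 (sq_nonneg _))
        rw [hx0] at h0; simpa using h0
      apply hx
      funext i
      fin_cases i <;> simp [hx0, hx1, hx2, hx3]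

/-- Positive definiteness of the perturbed dual matrix of the counter-example
is equivalent to the system of inequalities obtained by successive Schur
complements. -/
theorem counterexample_posdef_iff
    (t α y₁ y₂ y₃ : ℝ) (ht : 0 < t) (hα : 0 < α) :
    (!![1 + t * α - y₁, 0, -y₃, -y₃;
        0, t * α - y₂, -y₁, 0;
        -y₃, -y₁, t * α - y₃, 0;
        -y₃, 0, 0, t * α] : Matrix (Fin 4) (Fin 4) ℝ).PosDef ↔
      (0 < 1 + t * α - y₁ - y₃ ^ 2 / (t * α) ∧
       0 < t * α - y₂ ∧
       0 < -y₃ + t * α - y₃ ^ 2 / (1 + t * α - y₁ - y₃ ^ 2 / (t * α)) ∧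
       y₂ < t * α - y₁ ^ 2 /
         (-y₃ + t * α - y₃ ^ 2 / (1 + t * α - y₁ - y₃ ^ 2 / (t * α)))) := by
  exact counterexample_aux (t * α) _ _ y₁ y₂ y₃ (mul_pos ht hα) rfl rfl
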